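/- Assume regularity condition (H). Let 0 < λ₁ ≤ λ₂ < 1, and for i = 1,2 let p_i ∈ (0,1) satisfy (1−λ_i)·(1 − F(p_i) − p_i·f(p_i)) + λ_i·J·∫_{p_i}^1 F(v − p_i)^{J−1} f(v) dv = 0. Then p₁ ≤ p₂. (The equilibrium posted price under data-augmented bidding is increasing in the platform's market share λ.) -/
import Mathlib

open intervalIntegral

/-- Under regularity condition (H), the equilibrium posted price
under data-augmented bidding is increasing in the platform's market share λ. -/
theorem bidding_price_monotone_in_lambda
    (f F : ℝ → ℝ)
    (hf_cont : ContinuousOn f (Set.Icc 0 1))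
    (hf_pos : ∀ x ∈ Set.Icc (0:ℝ) 1, 0 < f x)
    (hf_logconcave : ConcaveOn ℝ (Set.Icc 0 1) (Real.log ∘ f))
    (hf_int : (∫ t in (0:ℝ)..1, f t) = 1)
    (hF : ∀ x, F x = ∫ t in (0:ℝ)..x, f t)
    (J : ℕ) (hJ : 2 ≤ J)
    (hreg : AntitoneOn (fun p : ℝ => 1 - F p - p * f p) (Set.Icc 0 1))
    (lam₁ lam₂ : ℝ) (hlam₁ : 0 < lam₁) (hlam₁₂ : lam₁ ≤ lam₂) (hlam₂ : lam₂ < 1)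
    (p₁ p₂ : ℝ) (hp₁ : p₁ ∈ Set.Ioo (0:ℝ) 1) (hp₂ : p₂ ∈ Set.Ioo (0:ℝ) 1)
    (h₁ : (1 - lam₁) * (1 - F p₁ - p₁ * f p₁)
        + lam₁ * (J : ℝ) * (∫ v in p₁..1, F (v - p₁) ^ (J - 1) * f v) = 0)
    (h₂ : (1 - lam₂) * (1 - F p₂ - p₂ * f p₂)
        + lam₂ * (J : ℝ) * (∫ v in p₂..1, F (v - p₂) ^ (J - 1) * f v) = 0) :
    p₁ ≤ p₂ := by
  by_contra hcon
  push_neg at hcon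
  obtain ⟨hp₁0, hp₁1⟩ := hp₁
  obtain ⟨hp₂0, hp₂1⟩ := hp₂
  have hJpos : (0:ℝ) < (J:ℝ) := by positivity
  have hJ1 : J - 1 ≠ 0 := by omega
  -- interval integrability of f on subintervals of [0,1]
  have hfint : ∀ a b : ℝ, a ∈ Set.Icc (0:ℝ) 1 → b ∈ Set.Icc (0:ℝ) 1 →
      IntervalIntegrable f MeasureTheory.volume a b := by
    intro a b ha hb
    apply ContinuousOn.intervalIntegrable
    apply hf_cont.mono
    exact Set.uIcc_subset_Icc ha hb
  -- F is continuous on [0,1]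
  have hFcont : ContinuousOn F (Set.Icc 0 1) := by
    have h1 : ContinuousOn (fun x => ∫ t in (0:ℝ)..x, f t) (Set.uIcc 0 1) := by
      apply intervalIntegral.continuousOn_primitive_interval
      rw [Set.uIcc_of_le (by norm_num : (0:ℝ) ≤ 1)]
      exact hf_cont.integrableOn_Icc
    rw [Set.uIcc_of_le (by norm_num : (0:ℝ) ≤ 1)] at h1
    exact (h1.congr fun x _ => hF x)
  -- difference formula for F
  have hFdiff : ∀ a b : ℝ, 0 ≤ a → a ≤ b → b ≤ 1 → F b = F a + ∫ t in a..b, f t := by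
    intro a b ha hab hb1
    rw [hF a, hF b, intervalIntegral.integral_add_adjacent_intervals
      (hfint 0 a ⟨le_refl 0, by linarith⟩ ⟨ha, by linarith⟩)
      (hfint a b ⟨ha, by linarith⟩ ⟨by linarith, hb1⟩)]
  -- F is monotone on [0,1]
  have hFmono : ∀ a b : ℝ, 0 ≤ a → a ≤ b → b ≤ 1 → F a ≤ F b := by
    intro a b ha hab hb1
    rw [hFdiff a b ha hab hb1]
    have : 0 ≤ ∫ t in a..b, f t := by
      apply intervalIntegral.integral_nonneg hab
      intro u hu
      exact (hf_pos u ⟨le_trans ha hu.1, le_trans hu.2 hb1⟩).le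
    linarith
  -- F is strictly monotone on [0,1]
  have hFstrict : ∀ a b : ℝ, 0 ≤ a → a < b → b ≤ 1 → F a < F b := by
    intro a b ha hab hb1
    rw [hFdiff a b ha hab.le hb1]
    have : 0 < ∫ t in a..b, f t := by
      apply intervalIntegral.intervalIntegral_pos_of_pos_on
        (hfint a b ⟨ha, by linarith⟩ ⟨by linarith, hb1⟩)
      · intro x hx
        exact hf_pos x ⟨le_trans ha hx.1.le, le_trans hx.2.le hb1⟩
      · exact hab
    linarith
  -- F is nonneg on [0,1]
  have hF0 : F 0 = 0 := by rw [hF 0, intervalIntegral.integral_same]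
  have hFnonneg : ∀ a : ℝ, 0 ≤ a → a ≤ 1 → 0 ≤ F a := by
    intro a ha ha1
    rw [← hF0]; exact hFmono 0 a le_rfl ha ha1
  -- continuity of the integrand
  have hgcont : ∀ p : ℝ, 0 ≤ p → p ≤ 1 →
      ContinuousOn (fun v => F (v - p) ^ (J - 1) * f v) (Set.Icc p 1) := by
    intro p hp hp1
    apply ContinuousOn.mul
    · apply ContinuousOn.pow
      apply hFcont.comp (by fun_prop)
      intro v hv
      exact ⟨by simp; linarith [hv.1], by simp; linarith [hv.2]⟩
    · exact hf_cont.mono (Set.Icc_subset_Icc hp le_rfl)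
  -- nonnegativity of the integrals
  have hInonneg : ∀ p : ℝ, 0 ≤ p → p ≤ 1 →
      0 ≤ ∫ v in p..1, F (v - p) ^ (J - 1) * f v := by
    intro p hp hp1
    apply intervalIntegral.integral_nonneg hp1
    intro u hu
    apply mul_nonneg
    · apply pow_nonneg
      exact hFnonneg _ (by linarith [hu.1]) (by linarith [hu.2])
    · exact (hf_pos u ⟨le_trans hp hu.1, hu.2⟩).le
  have hI₁ := hInonneg p₁ hp₁0.le hp₁1.le
  have hI₂ := hInonneg p₂ hp₂0.le hp₂1.le
  -- G p₁ ≤ 0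
  have hG₁ : 1 - F p₁ - p₁ * f p₁ ≤ 0 := by
    by_contra hG
    push_neg at hG
    have h1 : 0 < (1 - lam₁) * (1 - F p₁ - p₁ * f p₁) :=
      mul_pos (by linarith) hG
    have h2 : 0 ≤ lam₁ * (J:ℝ) * (∫ v in p₁..1, F (v - p₁) ^ (J - 1) * f v) :=
      mul_nonneg (mul_nonneg hlam₁.le hJpos.le) hI₁
    linarith
  -- G antitone: G p₁ ≤ G p₂
  have hGle : 1 - F p₁ - p₁ * f p₁ ≤ 1 - F p₂ - p₂ * f p₂ :=
    hreg ⟨hp₂0.le, hp₂1.le⟩ ⟨hp₁0.le, hp₁1.le⟩ hcon.le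
  -- Strict monotonicity of the integral term: I p₁ < I p₂
  have hIlt : (∫ v in p₁..1, F (v - p₁) ^ (J - 1) * f v)
      < ∫ v in p₂..1, F (v - p₂) ^ (J - 1) * f v := by
    have hcont2 := hgcont p₂ hp₂0.le hp₂1.le
    have hint_a : IntervalIntegrable (fun v => F (v - p₂) ^ (J - 1) * f v)
        MeasureTheory.volume p₂ p₁ := by
      apply ContinuousOn.intervalIntegrable
      apply hcont2.mono
      rw [Set.uIcc_of_le hcon.le]
      exact Set.Icc_subset_Icc le_rfl hp₁1.le
    have hint_b : IntervalIntegrable (fun v => F (v - p₂) ^ (J - 1) * f v)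
        MeasureTheory.volume p₁ 1 := by
      apply ContinuousOn.intervalIntegrable
      apply hcont2.mono
      rw [Set.uIcc_of_le hp₁1.le]
      exact Set.Icc_subset_Icc hcon.le le_rfl
    have hsplit : (∫ v in p₂..1, F (v - p₂) ^ (J - 1) * f v)
        = (∫ v in p₂..p₁, F (v - p₂) ^ (J - 1) * f v)
          + ∫ v in p₁..1, F (v - p₂) ^ (J - 1) * f v :=
      (intervalIntegral.integral_add_adjacent_intervals hint_a hint_b).symm
    have hpiece : 0 ≤ ∫ v in p₂..p₁, F (v - p₂) ^ (J - 1) * f v := by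
      apply intervalIntegral.integral_nonneg hcon.le
      intro u hu
      apply mul_nonneg
      · apply pow_nonneg
        exact hFnonneg _ (by linarith [hu.1]) (by linarith [hu.2, hp₂0])
      · exact (hf_pos u ⟨le_trans hp₂0.le hu.1, le_trans hu.2 hp₁1.le⟩).le
    have hlt : (∫ v in p₁..1, F (v - p₁) ^ (J - 1) * f v)
        < ∫ v in p₁..1, F (v - p₂) ^ (J - 1) * f v := by
      apply intervalIntegral.integral_lt_integral_of_continuousOn_of_le_of_exists_lt hp₁1
      · exact hgcont p₁ hp₁0.le hp₁1.le
      · exact hcont2.mono (Set.Icc_subset_Icc hcon.le le_rfl)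
      · intro v hv
        have h01 : 0 ≤ v - p₁ := by linarith [hv.1]
        have h02 : v - p₂ ≤ 1 := by linarith [hv.2]
        have hle : F (v - p₁) ≤ F (v - p₂) :=
          hFmono _ _ h01 (by linarith) h02
        apply mul_le_mul_of_nonneg_right
        · exact pow_le_pow_left₀ (hFnonneg _ h01 (by linarith)) hle _
        · exact (hf_pos v ⟨by linarith [hv.1], hv.2⟩).le
      · refine ⟨1, ⟨hp₁1.le, le_rfl⟩, ?_⟩
        have h01 : (0:ℝ) ≤ 1 - p₁ := by linarith
        have hlt' : F (1 - p₁) < F (1 - p₂) :=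
          hFstrict _ _ h01 (by linarith) (by linarith)
        have hfpos1 : 0 < f 1 := hf_pos 1 ⟨by norm_num, le_rfl⟩
        apply mul_lt_mul_of_pos_right _ hfpos1
        exact pow_lt_pow_left₀ hlt' (hFnonneg _ h01 (by linarith)) hJ1
    linarith [hsplit, hpiece, hlt]
  -- final contradiction
  have k1 : (1 - lam₂) * (1 - F p₁ - p₁ * f p₁)
      ≤ (1 - lam₂) * (1 - F p₂ - p₂ * f p₂) :=
    mul_le_mul_of_nonneg_left hGle (by linarith)
  have k2 : lam₂ * (J:ℝ) * (∫ v in p₁..1, F (v - p₁) ^ (J - 1) * f v)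
      < lam₂ * (J:ℝ) * (∫ v in p₂..1, F (v - p₂) ^ (J - 1) * f v) :=
    mul_lt_mul_of_pos_left hIlt (mul_pos (lt_of_lt_of_le hlam₁ hlam₁₂) hJpos)
  have k3 : 0 ≤ (lam₁ - lam₂) * (1 - F p₁ - p₁ * f p₁) :=
    by nlinarith [hG₁]
  have k4 : lam₁ * (J:ℝ) * (∫ v in p₁..1, F (v - p₁) ^ (J - 1) * f v)
      ≤ lam₂ * (J:ℝ) * (∫ v in p₁..1, F (v - p₁) ^ (J - 1) * f v) :=
    mul_le_mul_of_nonneg_right (mul_le_mul_of_nonneg_right hlam₁₂ hJpos.le) hI₁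
  nlinarith [h₁, h₂, k1, k2, k3, k4]
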